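/- arXiv:2309.00361 — 3 statements merged into one kernel-verified Lean document; each statement's English description precedes it below -/
import Mathlib

section
/- Correctness of temporal core decomposition: for [ts,te] ⊆ [ts',te'], the k-core of the projected graph G_[ts,te] equals the k-core of the graph obtained by first taking the k-core of G_[ts',te'] and then restricting its edges to timestamps in [ts,te]. -/
abbrev TEdge : Type := ℕ × ℕ × ℤ

/-- Projection of a temporal edge set over time interval [a,b]. -/
def projE (E : Finset TEdge) (a b : ℤ) : Finset TEdge :=
  E.filter (fun e => a ≤ e.2.2 ∧ e.2.2 ≤ b)

def verts (E : Finset TEdge) : Finset ℕ :=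
  E.image (fun e => e.1) ∪ E.image (fun e => e.2.1)

/-- Distinct neighbors of `v` inside vertex set `S` via edges of `E`. -/
def nbrs (E : Finset TEdge) (S : Finset ℕ) (v : ℕ) : Finset ℕ :=
  S.filter (fun u => u ≠ v ∧
    (E.filter (fun e => (e.1 = u ∧ e.2.1 = v) ∨ (e.1 = v ∧ e.2.1 = u))).Nonempty)

/-- `S` is a `k`-core candidate: every vertex of `S` has ≥ k distinct neighbors in `S`. -/
def isCoreSet (E : Finset TEdge) (k : ℕ) (S : Finset ℕ) : Prop :=
  ∀ v ∈ S, k ≤ (nbrs E S v).card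

instance (E : Finset TEdge) (k : ℕ) : DecidablePred (isCoreSet E k) := fun S => by
  unfold isCoreSet; infer_instance

/-- The `k`-core vertex set of a temporal edge set: union of all candidates. -/
def core (E : Finset TEdge) (k : ℕ) : Finset ℕ :=
  ((verts E).powerset.filter (isCoreSet E k)).sup id

/-- The edges of `E` induced among the `k`-core vertices. -/
def coreEdges (E : Finset TEdge) (k : ℕ) : Finset TEdge :=
  E.filter (fun e => e.1 ∈ core E k ∧ e.2.1 ∈ core E k)

/-- Vertices of the temporal k-core of interval [a,b]. -/
def coreV (E : Finset TEdge) (k : ℕ) (a b : ℤ) : Finset ℕ :=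
  core (projE E a b) k

/-- Temporal edges of the temporal k-core of interval [a,b]. -/
def coreE (E : Finset TEdge) (k : ℕ) (a b : ℤ) : Finset TEdge :=
  coreEdges (projE E a b) k

/-- Two intervals induce identical temporal k-cores (same vertices and temporal edges). -/
def identCore (E : Finset TEdge) (k : ℕ) (a b a' b' : ℤ) : Prop :=
  coreV E k a b = coreV E k a' b' ∧ coreE E k a b = coreE E k a' b'

lemma core_subset_verts (E : Finset TEdge) (k : ℕ) : core E k ⊆ verts E := by
  intro v hv
  rw [core, Finset.mem_sup] at hv
  obtain ⟨S, hS, hvS⟩ := hv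
  rw [Finset.mem_filter, Finset.mem_powerset] at hS
  exact hS.1 hvS

lemma subset_core (E : Finset TEdge) (k : ℕ) (S : Finset ℕ)
    (h1 : S ⊆ verts E) (h2 : isCoreSet E k S) : S ⊆ core E k := by
  have : S ∈ (verts E).powerset.filter (isCoreSet E k) := by
    rw [Finset.mem_filter, Finset.mem_powerset]; exact ⟨h1, h2⟩
  exact Finset.le_sup (f := id) this

lemma verts_mono {E E' : Finset TEdge} (h : E ⊆ E') : verts E ⊆ verts E' := by
  unfold verts
  exact Finset.union_subset_union (Finset.image_subset_image h)
    (Finset.image_subset_image h)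

lemma nbrs_mono_E {E E' : Finset TEdge} (h : E ⊆ E') (S : Finset ℕ) (v : ℕ) :
    nbrs E S v ⊆ nbrs E' S v := by
  intro u hu
  rw [nbrs, Finset.mem_filter] at hu ⊢
  obtain ⟨hS, hne, e, he⟩ := hu
  rw [Finset.mem_filter] at he
  exact ⟨hS, hne, e, Finset.mem_filter.2 ⟨h he.1, he.2⟩⟩

lemma nbrs_mono_S (E : Finset TEdge) {S S' : Finset ℕ} (h : S ⊆ S') (v : ℕ) :
    nbrs E S v ⊆ nbrs E S' v :=
  Finset.filter_subset_filter _ h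

lemma core_mono {E E' : Finset TEdge} (h : E ⊆ E') (k : ℕ) :
    core E k ⊆ core E' k := by
  intro v hv
  rw [core, Finset.mem_sup] at hv
  obtain ⟨S, hS, hvS⟩ := hv
  rw [Finset.mem_filter, Finset.mem_powerset] at hS
  refine subset_core E' k S (hS.1.trans (verts_mono h)) ?_ hvS
  intro w hw
  exact (hS.2 w hw).trans (Finset.card_le_card (nbrs_mono_E h S w))

lemma isCoreSet_core (E : Finset TEdge) (k : ℕ) : isCoreSet E k (core E k) := by
  intro v hv
  rw [core, Finset.mem_sup] at hv
  obtain ⟨S, hS, hvS⟩ := hv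
  rw [Finset.mem_filter, Finset.mem_powerset] at hS
  have hsub : S ⊆ core E k := subset_core E k S hS.1 hS.2
  exact (hS.2 v hvS).trans (Finset.card_le_card (nbrs_mono_S E hsub v))

/-- correctness of temporal core decomposition: for [ts,te] ⊆ [ts',te'],
the k-core of G_[ts,te] equals the k-core of (the k-core of G_[ts',te'] with its edges
restricted to timestamps in [ts,te]), both as vertex sets and with induced edges. -/
theorem stmt_5 (E : Finset TEdge) (k : ℕ) (ts te ts' te' : ℤ)
    (h1 : ts' ≤ ts) (h2 : te ≤ te') :
    core (projE E ts te) k = core (projE (coreE E k ts' te') ts te) k ∧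
    coreEdges (projE E ts te) k = coreEdges (projE (coreE E k ts' te') ts te) k := by
  set A := projE E ts te with hA
  set F := projE E ts' te' with hF
  set B := projE (coreE E k ts' te') ts te with hB
  have hAF : A ⊆ F := by
    intro e he
    rw [hA, projE, Finset.mem_filter] at he
    rw [hF, projE, Finset.mem_filter]
    exact ⟨he.1, le_trans h1 he.2.1, le_trans he.2.2 h2⟩
  have hBA : B ⊆ A := by
    intro e he
    rw [hB, projE, Finset.mem_filter] at he
    have he1 : e ∈ coreE E k ts' te' := he.1
    rw [coreE, coreEdges] at he1
    have hE' := Finset.filter_subset _ _ he1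
    rw [projE, Finset.mem_filter] at hE'
    rw [hA, projE, Finset.mem_filter]
    exact ⟨hE'.1, he.2⟩
  have hcoreAF : core A k ⊆ core F k := core_mono hAF k
  -- key: an edge of A with both endpoints in the core of A lies in B
  have key : ∀ e ∈ A, e.1 ∈ core A k → e.2.1 ∈ core A k → e ∈ B := by
    intro e heA h1' h2'
    have heF : e ∈ F := hAF heA
    have heCE : e ∈ coreE E k ts' te' := by
      rw [coreE, coreEdges, Finset.mem_filter, ← hF]
      exact ⟨heF, hcoreAF h1', hcoreAF h2'⟩
    rw [hA, projE, Finset.mem_filter] at heA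
    rw [hB, projE, Finset.mem_filter]
    exact ⟨heCE, heA.2⟩
  -- neighbors within the core of A via A are already via B
  have hnb : ∀ v ∈ core A k, nbrs A (core A k) v ⊆ nbrs B (core A k) v := by
    intro v hv u hu
    rw [nbrs, Finset.mem_filter] at hu ⊢
    obtain ⟨hS, hne, e, he⟩ := hu
    rw [Finset.mem_filter] at he
    have h1' : e.1 ∈ core A k := by rcases he.2 with ⟨h, _⟩ | ⟨h, _⟩ <;> rw [h] <;> assumption
    have h2' : e.2.1 ∈ core A k := by rcases he.2 with ⟨_, h⟩ | ⟨_, h⟩ <;> rw [h] <;> assumption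
    exact ⟨hS, hne, e, Finset.mem_filter.2 ⟨key e he.1 h1' h2', he.2⟩⟩
  have hcoreset : isCoreSet B k (core A k) := by
    intro v hv
    exact (isCoreSet_core A k v hv).trans (Finset.card_le_card (hnb v hv))
  have hverts : core A k ⊆ verts B := by
    rcases Nat.eq_zero_or_pos k with hk | hk
    · subst hk
      have hcore0 : verts A ⊆ core A 0 :=
        subset_core A 0 (verts A) (le_refl _) (fun v _ => Nat.zero_le _)
      intro v hv
      have hvA : v ∈ verts A := core_subset_verts A 0 hv
      rw [verts, Finset.mem_union, Finset.mem_image, Finset.mem_image] at hvA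
      have hend : ∀ e ∈ A, e ∈ B := by
        intro e he
        apply key e he
        · apply hcore0
          rw [verts, Finset.mem_union]
          exact Or.inl (Finset.mem_image_of_mem _ he)
        · apply hcore0
          rw [verts, Finset.mem_union]
          exact Or.inr (Finset.mem_image_of_mem _ he)
      rw [verts, Finset.mem_union, Finset.mem_image, Finset.mem_image]
      rcases hvA with ⟨e, he, hev⟩ | ⟨e, he, hev⟩
      · exact Or.inl ⟨e, hend e he, hev⟩
      · exact Or.inr ⟨e, hend e he, hev⟩
    · intro v hv
      have := hcoreset v hv
      have hcard : 0 < (nbrs B (core A k) v).card := lt_of_lt_of_le hk this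
      obtain ⟨u, hu⟩ := Finset.card_pos.1 hcard
      rw [nbrs, Finset.mem_filter] at hu
      obtain ⟨_, _, e, he⟩ := hu
      rw [Finset.mem_filter] at he
      rw [verts, Finset.mem_union, Finset.mem_image, Finset.mem_image]
      rcases he.2 with ⟨_, h⟩ | ⟨h, _⟩
      · exact Or.inr ⟨e, he.1, h⟩
      · exact Or.inl ⟨e, he.1, h⟩
  have hcore : core A k = core B k := by
    apply Finset.Subset.antisymm
    · exact subset_core B k (core A k) hverts hcoreset
    · exact core_mono hBA k
  refine ⟨hcore, ?_⟩
  ext e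
  rw [coreEdges, coreEdges, Finset.mem_filter, Finset.mem_filter, ← hcore]
  constructor
  · rintro ⟨heA, h1', h2'⟩
    exact ⟨key e heA h1' h2', h1', h2'⟩
  · rintro ⟨heB, h1', h2'⟩
    exact ⟨hBA heB, h1', h2'⟩
end

section
/- Every interval inducing a given temporal k-core lies in a rectangle bounded by the TTI and some LTI: if T^k_[a,b] is identical to a fixed nonempty core T with TTI [ts,te], then there exists a loosest time interval [ts',te'] of T (i.e., a maximal subinterval of the query range inducing a core identical to T) such that ts' ≤ a ≤ ts and te ≤ b ≤ te'. -/
/-- `[ts',te']` is a loosest time interval (within query range `[Ts,Te]`) of the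
temporal k-core induced by `[ts,te]`: it induces an identical core and is maximal
among subintervals of `[Ts,Te]` doing so. -/
def isLTI (E : Finset TEdge) (k : ℕ) (Ts Te ts te ts' te' : ℤ) : Prop :=
  Ts ≤ ts' ∧ ts' ≤ te' ∧ te' ≤ Te ∧ identCore E k ts' te' ts te ∧
    ∀ a b : ℤ, Ts ≤ a → a ≤ ts' → te' ≤ b → b ≤ Te →
      identCore E k a b ts te → a = ts' ∧ b = te'

/-- every interval inducing a given nonempty temporal k-core
(whose TTI is [ts,te]) lies in a rectangle bounded by the TTI and some LTI. -/
theorem stmt_11 (E : Finset TEdge) (k : ℕ) (Ts Te ts te a b : ℤ)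
    (hTs : Ts ≤ ts) (hTe : te ≤ Te)
    (hne : (coreE E k ts te).Nonempty)
    (hmin : IsLeast {t : ℤ | ∃ e ∈ coreE E k ts te, e.2.2 = t} ts)
    (hmax : IsGreatest {t : ℤ | ∃ e ∈ coreE E k ts te, e.2.2 = t} te)
    (hq1 : Ts ≤ a) (hq2 : a ≤ b) (hq3 : b ≤ Te)
    (hid : identCore E k a b ts te) :
    ∃ ts' te' : ℤ, isLTI E k Ts Te ts te ts' te' ∧
      ts' ≤ a ∧ a ≤ ts ∧ te ≤ b ∧ b ≤ te' := by
  classical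
  -- a ≤ ts and te ≤ b
  have hEab : coreE E k a b = coreE E k ts te := hid.2
  obtain ⟨e1, he1, het1⟩ := hmin.1
  obtain ⟨e2, he2, het2⟩ := hmax.1
  rw [← hEab] at he1 he2
  have hproj1 : e1 ∈ projE E a b := Finset.mem_filter.1 he1 |>.1
  have hproj2 : e2 ∈ projE E a b := Finset.mem_filter.1 he2 |>.1
  have h1 := (Finset.mem_filter.1 hproj1).2
  have h2 := (Finset.mem_filter.1 hproj2).2
  have hats : a ≤ ts := het1 ▸ h1.1
  have hteb : te ≤ b := het2 ▸ h2.2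
  -- finite set of candidate intervals
  set F : Finset (ℤ × ℤ) :=
    (Finset.Icc Ts a ×ˢ Finset.Icc b Te).filter
      (fun p => identCore E k p.1 p.2 ts te) with hF
  have hmemF : (a, b) ∈ F := by
    simp only [hF, Finset.mem_filter, Finset.mem_product, Finset.mem_Icc]
    exact ⟨⟨⟨hq1, le_refl a⟩, le_refl b, hq3⟩, hid⟩
  obtain ⟨p, hpF, hpmax⟩ := F.exists_max_image (fun p => p.2 - p.1) ⟨_, hmemF⟩
  obtain ⟨⟨⟨hp1, hp2⟩, hp3, hp4⟩, hp5⟩ := by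
    simpa only [hF, Finset.mem_filter, Finset.mem_product, Finset.mem_Icc] using hpF
  refine ⟨p.1, p.2, ⟨hp1, le_trans hp2 (le_trans hq2 hp3), hp4, hp5, ?_⟩,
    hp2, hats, hteb, hp3⟩
  intro a0 b0 h1' h2' h3' h4' hid0
  have hmem0 : (a0, b0) ∈ F := by
    simp only [hF, Finset.mem_filter, Finset.mem_product, Finset.mem_Icc]
    exact ⟨⟨⟨h1', le_trans h2' hp2⟩, le_trans hp3 h3', h4'⟩, hid0⟩
  have := hpmax _ hmem0
  constructor <;> omega
end

section
/- Every tightest time interval contained in the query range is contained in each of the loosest time intervals of its core; consequently, any two LTIs of the same temporal k-core have nonempty intersection (they all contain the TTI). -/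
lemma mem_coreE_time {E : Finset TEdge} {k : ℕ} {a b : ℤ} {e : TEdge}
    (h : e ∈ coreE E k a b) : a ≤ e.2.2 ∧ e.2.2 ≤ b := by
  unfold coreE coreEdges projE at h
  simp only [Finset.mem_filter] at h
  exact h.1.2

/-- the TTI is contained in each LTI of its core; consequently any
two LTIs of the same temporal k-core have nonempty intersection. -/
theorem stmt_13 (E : Finset TEdge) (k : ℕ) (Ts Te ts te : ℤ)
    (hTs : Ts ≤ ts) (hTe : te ≤ Te)
    (hne : (coreE E k ts te).Nonempty)
    (hmin : IsLeast {t : ℤ | ∃ e ∈ coreE E k ts te, e.2.2 = t} ts)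
    (hmax : IsGreatest {t : ℤ | ∃ e ∈ coreE E k ts te, e.2.2 = t} te) :
    (∀ ts' te' : ℤ, isLTI E k Ts Te ts te ts' te' → ts' ≤ ts ∧ te ≤ te') ∧
    (∀ ts₁ te₁ ts₂ te₂ : ℤ, isLTI E k Ts Te ts te ts₁ te₁ →
      isLTI E k Ts Te ts te ts₂ te₂ →
      ∃ t : ℤ, ts₁ ≤ t ∧ t ≤ te₁ ∧ ts₂ ≤ t ∧ t ≤ te₂) := by
  have key : ∀ ts' te' : ℤ, isLTI E k Ts Te ts te ts' te' → ts' ≤ ts ∧ te ≤ te' := by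
    intro ts' te' h
    obtain ⟨_, _, _, ⟨_, hE⟩, _⟩ := h
    obtain ⟨e1, he1, ht1⟩ := hmin.1
    obtain ⟨e2, he2, ht2⟩ := hmax.1
    rw [← hE] at he1 he2
    constructor
    · calc ts' ≤ e1.2.2 := (mem_coreE_time he1).1
        _ = ts := ht1
    · calc te = e2.2.2 := ht2.symm
        _ ≤ te' := (mem_coreE_time he2).2
  have hts_le : ts ≤ te := by
    obtain ⟨e, he, ht⟩ := hmin.1
    calc ts = e.2.2 := ht.symm
      _ ≤ te := hmax.2 ⟨e, he, rfl⟩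
  refine ⟨key, fun ts₁ te₁ ts₂ te₂ h1 h2 => ?_⟩
  obtain ⟨a1, b1⟩ := key _ _ h1
  obtain ⟨a2, b2⟩ := key _ _ h2
  exact ⟨ts, a1, le_trans hts_le b1, a2, le_trans hts_le b2⟩
end
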